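/- Let P be an n×n symmetric nonnegative matrix with Laplacian L(P) having eigenvalues 0 = λ_1 = ... = λ_R < λ_{R+1} ≤ ... ≤ λ_n, and let U ∈ R^{n×R} have orthonormal columns spanning the null space of L(P). Let H_n = (1/(n(n-1)))(1_n 1_n^T − I_n), and suppose h, α > 0 satisfy h·α·λ_n < 1. Then for every y ∈ R^n, ‖(I − h·L(αP − H_n))^k y − (1 + h/(n-1))^k U'U'^T y − n^{-1} 1_n 1_n^T y‖_2 ≤ (1 + h/(n-1) − h·α·λ_{R+1})^k ‖y‖_2, where U' consists of the columns of U orthogonal to 1_n. -/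

import Mathlib

open Matrix BigOperators

/-- The graph Laplacian L(A) = D(A) - A. -/
noncomputable def lap {n : ℕ} (A : Matrix (Fin n) (Fin n) ℝ) : Matrix (Fin n) (Fin n) ℝ :=
  Matrix.diagonal (fun j => ∑ i, A i j) - A

/-- The centering matrix H_n = (1/(n(n-1)))(1 1ᵀ − I). -/
noncomputable def Hmat (n : ℕ) : Matrix (Fin n) (Fin n) ℝ :=
  (((n : ℝ) * ((n : ℝ) - 1))⁻¹) • (Matrix.of (fun _ _ => (1 : ℝ)) - 1)

/-- Euclidean norm of a vector. -/
noncomputable def vnorm {n : ℕ} (v : Fin n → ℝ) : ℝ := Real.sqrt (∑ i, v i ^ 2)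

lemma mulVec_sum' {n : ℕ} (A : Matrix (Fin n) (Fin n) ℝ) (f : Fin n → (Fin n → ℝ)) :
    A.mulVec (∑ i, f i) = ∑ i, A.mulVec (f i) := by
  exact map_sum (Matrix.mulVecLin A) f Finset.univ

lemma lap_sub' {n : ℕ} (A B : Matrix (Fin n) (Fin n) ℝ) : lap (A - B) = lap A - lap B := by
  ext i j
  simp only [lap, Matrix.sub_apply, Matrix.diagonal_apply, Finset.sum_sub_distrib]
  split <;> ring

lemma lap_smul' {n : ℕ} (r : ℝ) (A : Matrix (Fin n) (Fin n) ℝ) : lap (r • A) = r • lap A := by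
  ext i j
  simp only [lap, Matrix.smul_apply, Matrix.sub_apply, Matrix.diagonal_apply, smul_eq_mul,
    ← Finset.mul_sum]
  split <;> ring

lemma lapH_mulVec {n : ℕ} (v : Fin n → ℝ) :
    (lap (Hmat n)).mulVec v = fun j => ((n:ℝ)*((n:ℝ)-1))⁻¹ * ((n:ℝ) * v j - ∑ k, v k) := by
  funext j
  simp only [lap, Hmat, Matrix.mulVec, dotProduct, Matrix.sub_apply, Matrix.smul_apply,
    Matrix.diagonal_apply, Matrix.one_apply, Matrix.of_apply, smul_eq_mul]
  simp only [mul_sub, sub_mul, mul_ite, ite_mul, mul_one, mul_zero, one_mul, zero_mul,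
    Finset.sum_sub_distrib, Finset.sum_ite_eq, Finset.sum_ite_eq', Finset.mem_univ, if_true,
    Finset.sum_const, Finset.card_univ, Fintype.card_fin, nsmul_eq_mul, ← Finset.mul_sum]
  ring

/-- Power-iteration bound: if L(P) has eigenvalues 0 = λ_1 = ... = λ_R < λ_{R+1} ≤ ... ≤ λ_n
with orthonormal eigenvectors u_i, the first being n^{-1/2}1, and hαλ_n < 1, then for all y,
‖(I − h L(αP − H_n))^k y − (1 + h/(n-1))^k U'U'ᵀ y − n⁻¹ 1 1ᵀ y‖₂
  ≤ (1 + h/(n-1) − hαλ_{R+1})^k ‖y‖₂,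
where U' consists of the null-space eigenvectors orthogonal to 1. -/
theorem power_iteration_bound {n R : ℕ} (hn : 2 ≤ n) (hR : 0 < R) (hRn : R < n)
    (P : Matrix (Fin n) (Fin n) ℝ) (hsym : P.IsSymm) (hnonneg : ∀ i j, 0 ≤ P i j)
    (u : Fin n → (Fin n → ℝ)) (lam : Fin n → ℝ)
    (horth : ∀ i j, u i ⬝ᵥ u j = if i = j then 1 else 0)
    (heig : ∀ i, (lap P).mulVec (u i) = lam i • u i)
    (hmono : Monotone lam)
    (hnull : ∀ i : Fin n, lam i = 0 ↔ (i : ℕ) < R)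
    (hone : u ⟨0, by omega⟩ = fun _ => (Real.sqrt n)⁻¹)
    (α h : ℝ) (hα : 0 < α) (hh : 0 < h)
    (hlt : h * α * lam ⟨n - 1, by omega⟩ < 1)
    (y : Fin n → ℝ) (k : ℕ) :
    vnorm ((((1 : Matrix (Fin n) (Fin n) ℝ) - h • lap (α • P - Hmat n)) ^ k).mulVec y
        - (1 + h / ((n : ℝ) - 1)) ^ k •
            ∑ i ∈ Finset.univ.filter (fun i : Fin n => 0 < (i : ℕ) ∧ (i : ℕ) < R),
              (u i ⬝ᵥ y) • u i
        - (n : ℝ)⁻¹ • (∑ j, y j) • (fun _ => (1 : ℝ)))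
      ≤ (1 + h / ((n : ℝ) - 1) - h * α * lam ⟨R, hRn⟩) ^ k * vnorm y := by
  classical
  have hn0 : (0:ℝ) < (n:ℝ) := by exact_mod_cast (by omega : 0 < n)
  have hn1 : (1:ℝ) < (n:ℝ) := by exact_mod_cast (by omega : 1 < n)
  have hn1' : (0:ℝ) < (n:ℝ) - 1 := by linarith
  have hsq : (0:ℝ) < Real.sqrt n := Real.sqrt_pos.mpr hn0
  set i0 : Fin n := ⟨0, by omega⟩ with hi0
  have hone' : u i0 = fun _ => (Real.sqrt n)⁻¹ := hone
  have hlam0 : lam i0 = 0 := (hnull i0).mpr (by simpa using hR)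
  set c : ℝ := 1 + h / ((n:ℝ) - 1) with hc
  set μ : Fin n → ℝ := fun i => if i = i0 then 1 else c - h * α * lam i with hμdef
  set M : Matrix (Fin n) (Fin n) ℝ := (1 : Matrix (Fin n) (Fin n) ℝ) - h • lap (α • P - Hmat n)
    with hMdef
  -- sums of eigenvector entries
  have hsumu : ∀ i : Fin n, i ≠ i0 → ∑ j, u i j = 0 := by
    intro i hi
    have h0 := horth i i0
    rw [if_neg hi, hone'] at h0
    have h1 : (∑ j, u i j) * (Real.sqrt n)⁻¹ = 0 := by
      simpa [dotProduct, Finset.sum_mul] using h0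
    rcases mul_eq_zero.mp h1 with h2 | h2
    · exact h2
    · exact absurd h2 (by positivity)
  -- eigen computation for M
  have hMu : ∀ i, M.mulVec (u i) = μ i • u i := by
    intro i
    have hL : (lap (α • P - Hmat n)).mulVec (u i)
        = α • (lam i • u i) - (lap (Hmat n)).mulVec (u i) := by
      rw [lap_sub', lap_smul', Matrix.sub_mulVec, Matrix.smul_mulVec, heig]
    have hMv : M.mulVec (u i) = u i - h • (α • (lam i • u i) - (lap (Hmat n)).mulVec (u i)) := by
      rw [hMdef, Matrix.sub_mulVec, Matrix.one_mulVec, Matrix.smul_mulVec, hL]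
    by_cases hi : i = i0
    · subst hi
      funext j
      rw [hMv, lapH_mulVec]
      simp only [hone', Pi.sub_apply, Pi.smul_apply, smul_eq_mul, Finset.sum_const,
        Finset.card_univ, Fintype.card_fin, nsmul_eq_mul, hlam0, hμdef, if_pos rfl]
      ring
    · funext j
      rw [hMv, lapH_mulVec]
      simp only [Pi.sub_apply, Pi.smul_apply, smul_eq_mul, hsumu i hi, hμdef, if_neg hi, hc]
      have hne : (n:ℝ) ≠ 0 := ne_of_gt hn0
      have hne1 : (n:ℝ) - 1 ≠ 0 := ne_of_gt hn1'
      field_simp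
      ring
  have hMk : ∀ (m : ℕ) (i), (M ^ m).mulVec (u i) = μ i ^ m • u i := by
    intro m
    induction m with
    | zero => intro i; simp [Matrix.one_mulVec]
    | succ m ih =>
      intro i
      rw [pow_succ, ← Matrix.mulVec_mulVec, hMu, Matrix.mulVec_smul, ih, smul_smul, ← pow_succ']
  -- orthonormal completeness via the Gram matrix
  set Q : Matrix (Fin n) (Fin n) ℝ := Matrix.of u with hQdef
  have hQQ : Q * Qᵀ = 1 := by
    ext i j
    have := horth i j
    simpa [Matrix.mul_apply, dotProduct, Matrix.one_apply, hQdef] using this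
  have hQQ' : Qᵀ * Q = 1 := mul_eq_one_comm.mp hQQ
  have hexp : ∀ j, ∑ i, (u i ⬝ᵥ y) * u i j = y j := by
    intro j
    have h2 : ((Qᵀ * Q).mulVec y) j = y j := by rw [hQQ', Matrix.one_mulVec]
    rw [← h2]
    simp only [Matrix.mulVec, Matrix.mul_apply, dotProduct, Matrix.transpose_apply, hQdef,
      Matrix.of_apply, Finset.sum_mul, Finset.mul_sum]
    rw [Finset.sum_comm]
    exact Finset.sum_congr rfl fun i _ => Finset.sum_congr rfl fun l _ => by ring
  have hdec : y = ∑ i, (u i ⬝ᵥ y) • u i := by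
    funext j
    rw [Finset.sum_apply]
    simp only [Pi.smul_apply, smul_eq_mul]
    exact (hexp j).symm
  have hpar : ∑ i, (u i ⬝ᵥ y) ^ 2 = ∑ j, y j ^ 2 := by
    calc ∑ i, (u i ⬝ᵥ y) ^ 2 = ∑ i, ∑ j, ((u i ⬝ᵥ y) * u i j) * y j := by
          refine Finset.sum_congr rfl fun i _ => ?_
          rw [sq]
          nth_rewrite 2 [dotProduct]
          rw [Finset.mul_sum]
          exact Finset.sum_congr rfl fun j _ => by ring
      _ = ∑ j, (∑ i, (u i ⬝ᵥ y) * u i j) * y j := by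
          rw [Finset.sum_comm]
          exact Finset.sum_congr rfl fun j _ => (Finset.sum_mul _ _ _).symm
      _ = ∑ j, y j ^ 2 := by
          refine Finset.sum_congr rfl fun j _ => ?_
          rw [hexp j, sq]
  -- norm of an orthonormal expansion
  have hnormS : ∀ (S : Finset (Fin n)) (a : Fin n → ℝ),
      ∑ j, (∑ i ∈ S, a i * u i j) ^ 2 = ∑ i ∈ S, (a i) ^ 2 := by
    intro S a
    have hstep : ∀ j : Fin n, (∑ i ∈ S, a i * u i j) ^ 2
        = ∑ i ∈ S, ∑ i' ∈ S, (a i * a i') * (u i j * u i' j) := by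
      intro j
      rw [sq, Finset.sum_mul_sum]
      exact Finset.sum_congr rfl fun i _ => Finset.sum_congr rfl fun i' _ => by ring
    calc ∑ j, (∑ i ∈ S, a i * u i j) ^ 2
        = ∑ j, ∑ i ∈ S, ∑ i' ∈ S, (a i * a i') * (u i j * u i' j) := by
          exact Finset.sum_congr rfl fun j _ => hstep j
      _ = ∑ i ∈ S, ∑ j, ∑ i' ∈ S, (a i * a i') * (u i j * u i' j) := Finset.sum_comm
      _ = ∑ i ∈ S, ∑ i' ∈ S, ∑ j, (a i * a i') * (u i j * u i' j) := by
          exact Finset.sum_congr rfl fun i _ => Finset.sum_comm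
      _ = ∑ i ∈ S, ∑ i' ∈ S, (a i * a i') * (if i = i' then 1 else 0) := by
          refine Finset.sum_congr rfl fun i _ => Finset.sum_congr rfl fun i' _ => ?_
          rw [← Finset.mul_sum, ← dotProduct, horth]
      _ = ∑ i ∈ S, (a i) ^ 2 := by
          refine Finset.sum_congr rfl fun i hi => ?_
          rw [Finset.sum_congr rfl (fun i' _ => mul_ite (i = i') (a i * a i') 1 0)]
          simp only [mul_one, mul_zero]
          rw [Finset.sum_ite_eq _ i (fun i' => a i * a i'), if_pos hi, sq]
  -- the three index classes
  have hsplit : ∀ f : Fin n → (Fin n → ℝ), ∑ i, f i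
      = f i0 + ∑ i ∈ Finset.univ.filter (fun i : Fin n => 0 < (i:ℕ) ∧ (i:ℕ) < R), f i
        + ∑ i ∈ Finset.univ.filter (fun i : Fin n => R ≤ (i:ℕ)), f i := by
    intro f
    have h1 : Finset.univ.filter (fun i : Fin n => (i:ℕ) < R)
        = insert i0 (Finset.univ.filter (fun i : Fin n => 0 < (i:ℕ) ∧ (i:ℕ) < R)) := by
      ext i
      simp only [Finset.mem_filter, Finset.mem_insert, Finset.mem_univ, true_and]
      constructor
      · intro hiR
        rcases Nat.eq_zero_or_pos (i:ℕ) with h0 | h0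
        · exact Or.inl (Fin.ext (by simpa [hi0] using h0))
        · exact Or.inr ⟨h0, hiR⟩
      · rintro (rfl | ⟨_, h2⟩)
        · simpa [hi0] using hR
        · exact h2
    have h2 : i0 ∉ Finset.univ.filter (fun i : Fin n => 0 < (i:ℕ) ∧ (i:ℕ) < R) := by
      simp [hi0]
    have h3 : Finset.univ.filter (fun i : Fin n => ¬ (i:ℕ) < R)
        = Finset.univ.filter (fun i : Fin n => R ≤ (i:ℕ)) := by
      ext i; simp only [Finset.mem_filter, Finset.mem_univ, true_and]; omega
    rw [← Finset.sum_filter_add_sum_filter_not Finset.univ (fun i : Fin n => (i:ℕ) < R) f,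
      h1, Finset.sum_insert h2, h3]
  -- identify the error vector
  have hMky : (M ^ k).mulVec y = ∑ i, ((u i ⬝ᵥ y) * μ i ^ k) • u i := by
    conv_lhs => rw [hdec]
    rw [mulVec_sum']
    exact Finset.sum_congr rfl fun i _ => by
      rw [Matrix.mulVec_smul, hMk, smul_smul]
  have hinv2 : (Real.sqrt n)⁻¹ * (Real.sqrt n)⁻¹ = (n:ℝ)⁻¹ := by
    rw [← mul_inv, Real.mul_self_sqrt (le_of_lt hn0)]
  have h0term : ((u i0 ⬝ᵥ y) * μ i0 ^ k) • u i0
      = (n : ℝ)⁻¹ • (∑ j, y j) • (fun _ => (1:ℝ)) := by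
    funext j
    have hcf0 : u i0 ⬝ᵥ y = (Real.sqrt n)⁻¹ * ∑ j, y j := by
      rw [hone', dotProduct, Finset.mul_sum]
    simp only [Pi.smul_apply, smul_eq_mul, hμdef, if_pos rfl, one_pow, mul_one]
    rw [hcf0, hone']
    show (Real.sqrt n)⁻¹ * (∑ j, y j) * (Real.sqrt n)⁻¹ = (n:ℝ)⁻¹ * ∑ j, y j
    rw [← hinv2]; ring
  have hmidterm : ∀ i ∈ Finset.univ.filter (fun i : Fin n => 0 < (i:ℕ) ∧ (i:ℕ) < R),
      ((u i ⬝ᵥ y) * μ i ^ k) • u i = c ^ k • ((u i ⬝ᵥ y) • u i) := by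
    intro i hi
    rw [Finset.mem_filter] at hi
    have hne : i ≠ i0 := by
      intro e; rw [e] at hi; simp [hi0] at hi
    have hli : lam i = 0 := (hnull i).mpr hi.2.2
    rw [hμdef]
    simp only [if_neg hne, hli, mul_zero, sub_zero, smul_smul]
    ring_nf
  have hdiff : (M ^ k).mulVec y
      - c ^ k • ∑ i ∈ Finset.univ.filter (fun i : Fin n => 0 < (i:ℕ) ∧ (i:ℕ) < R),
          (u i ⬝ᵥ y) • u i
      - (n : ℝ)⁻¹ • (∑ j, y j) • (fun _ => (1:ℝ))
      = ∑ i ∈ Finset.univ.filter (fun i : Fin n => R ≤ (i:ℕ)),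
          ((u i ⬝ᵥ y) * μ i ^ k) • u i := by
    rw [hMky, hsplit (fun i => ((u i ⬝ᵥ y) * μ i ^ k) • u i), ← h0term, Finset.smul_sum,
      ← Finset.sum_congr rfl hmidterm]
    abel
  -- bounds on the eigenvalue factors
  set μR : ℝ := c - h * α * lam ⟨R, hRn⟩ with hμR
  have hbnd : ∀ i ∈ Finset.univ.filter (fun i : Fin n => R ≤ (i:ℕ)), 0 ≤ μ i ∧ μ i ≤ μR := by
    intro i hi
    rw [Finset.mem_filter] at hi
    have hiR : R ≤ (i:ℕ) := hi.2
    have hne : i ≠ i0 := by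
      intro e; rw [e] at hiR; simp [hi0] at hiR; omega
    have hμi : μ i = c - h * α * lam i := by rw [hμdef]; exact if_neg hne
    have hlt' : h * α * lam ⟨n - 1, (by omega : n - 1 < n)⟩ < 1 := hlt
    have hlast : lam i ≤ lam ⟨n - 1, (by omega : n - 1 < n)⟩ := hmono (by
      rw [Fin.le_def]; simp only []; omega)
    have hfst : lam ⟨R, hRn⟩ ≤ lam i := hmono (by rw [Fin.le_def]; exact hiR)
    have hαh : (0:ℝ) < h * α := mul_pos hh hα
    have h1 : h * α * lam i ≤ h * α * lam ⟨n - 1, (by omega : n - 1 < n)⟩ :=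
      mul_le_mul_of_nonneg_left hlast (le_of_lt hαh)
    have h2 : h * α * lam ⟨R, hRn⟩ ≤ h * α * lam i :=
      mul_le_mul_of_nonneg_left hfst (le_of_lt hαh)
    have hcpos : (0:ℝ) < h / ((n:ℝ) - 1) := div_pos hh hn1'
    constructor
    · rw [hμi, hc]; linarith
    · rw [hμi, hμR]; linarith
  have hμR0 : 0 ≤ μR := by
    have hm : (⟨R, hRn⟩ : Fin n) ∈ Finset.univ.filter (fun i : Fin n => R ≤ (i:ℕ)) := by
      simp
    have := hbnd _ hm
    linarith [this.1, this.2]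
  -- final norm estimate
  rw [hdiff, vnorm, vnorm]
  have happly : ∀ j, (∑ i ∈ Finset.univ.filter (fun i : Fin n => R ≤ (i:ℕ)),
      ((u i ⬝ᵥ y) * μ i ^ k) • u i) j
      = ∑ i ∈ Finset.univ.filter (fun i : Fin n => R ≤ (i:ℕ)), ((u i ⬝ᵥ y) * μ i ^ k) * u i j := by
    intro j
    rw [Finset.sum_apply]
    exact Finset.sum_congr rfl fun i _ => rfl
  simp only [happly]
  rw [hnormS]
  have hb : ∑ i ∈ Finset.univ.filter (fun i : Fin n => R ≤ (i:ℕ)), ((u i ⬝ᵥ y) * μ i ^ k) ^ 2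
      ≤ (μR ^ k) ^ 2 * ∑ j, y j ^ 2 := by
    calc ∑ i ∈ Finset.univ.filter (fun i : Fin n => R ≤ (i:ℕ)), ((u i ⬝ᵥ y) * μ i ^ k) ^ 2
        ≤ ∑ i ∈ Finset.univ.filter (fun i : Fin n => R ≤ (i:ℕ)), (μR ^ k) ^ 2 * (u i ⬝ᵥ y) ^ 2 := by
          refine Finset.sum_le_sum fun i hi => ?_
          obtain ⟨h0, h1⟩ := hbnd i hi
          have hp : μ i ^ k ≤ μR ^ k := pow_le_pow_left₀ h0 h1 k
          have hp0 : 0 ≤ μ i ^ k := pow_nonneg h0 k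
          have hsq2 : (μ i ^ k) ^ 2 ≤ (μR ^ k) ^ 2 := pow_le_pow_left₀ hp0 hp 2
          calc ((u i ⬝ᵥ y) * μ i ^ k) ^ 2 = (μ i ^ k) ^ 2 * (u i ⬝ᵥ y) ^ 2 := by ring
            _ ≤ (μR ^ k) ^ 2 * (u i ⬝ᵥ y) ^ 2 :=
                mul_le_mul_of_nonneg_right hsq2 (sq_nonneg _)
      _ = (μR ^ k) ^ 2 * ∑ i ∈ Finset.univ.filter (fun i : Fin n => R ≤ (i:ℕ)), (u i ⬝ᵥ y) ^ 2 :=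
          (Finset.mul_sum _ _ _).symm
      _ ≤ (μR ^ k) ^ 2 * ∑ i, (u i ⬝ᵥ y) ^ 2 := by
          refine mul_le_mul_of_nonneg_left ?_ (sq_nonneg _)
          exact Finset.sum_le_sum_of_subset_of_nonneg (Finset.filter_subset _ _)
            (fun i _ _ => sq_nonneg _)
      _ = (μR ^ k) ^ 2 * ∑ j, y j ^ 2 := by rw [hpar]
  calc Real.sqrt (∑ i ∈ Finset.univ.filter (fun i : Fin n => R ≤ (i:ℕ)),
          ((u i ⬝ᵥ y) * μ i ^ k) ^ 2)
      ≤ Real.sqrt ((μR ^ k) ^ 2 * ∑ j, y j ^ 2) := Real.sqrt_le_sqrt hb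
    _ = μR ^ k * Real.sqrt (∑ j, y j ^ 2) := by
        rw [Real.sqrt_mul (sq_nonneg _), Real.sqrt_sq (pow_nonneg hμR0 k)]
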